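/- arXiv:1105.2254 — 5 statements merged into one kernel-verified Lean document; each statement's English description precedes it below -/
import Mathlib

section
/- Fix k > 0 and a constant p ∈ ℝ², and let the vehicle state be frozen at position 0 and heading π/2, so that the measured output is z = R_{−π/2} p and the estimated output is ẑ = R_{−π/2} p̂(t). If p̂ : ℝ → ℝ² is differentiable and satisfies the non-invariant correction dynamics p̂'(t) = −k (ẑ(t) − z), then d/dt ‖p̂(t) − p‖² = 0 for all t; i.e. the estimation error of the landmark does not decrease and the landmark is not correctly estimated. -/
open Real Matrix

/-- The planar rotation matrix `R_θ`. -/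
noncomputable def Rot (θ : ℝ) : Matrix (Fin 2) (Fin 2) ℝ :=
  !![Real.cos θ, -Real.sin θ; Real.sin θ, Real.cos θ]

/-- The action of `R_θ` on `ℝ²` with its Euclidean structure. -/
noncomputable def rotE (θ : ℝ) : EuclideanSpace ℝ (Fin 2) →ₗ[ℝ] EuclideanSpace ℝ (Fin 2) :=
  Matrix.toEuclideanLin (Rot θ)

lemma rot_skew (v : EuclideanSpace ℝ (Fin 2)) :
    inner ℝ (rotE (-(π / 2)) v) v = (0 : ℝ) := by
  simp [rotE, Rot, Matrix.toEuclideanLin_apply, PiLp.inner_apply, Fin.sum_univ_two,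
    Matrix.mulVec, dotProduct]
  ring

/-- **Non-invariant landmark correction fails.**
With the vehicle frozen at position `0`, heading `π/2`, measured output `z = R_{−π/2} p`,
estimated output `ẑ(t) = R_{−π/2} p̂(t)`, and the non-invariant correction dynamics
`p̂' = −k (ẑ − z)` with `k > 0`, the squared estimation error `‖p̂(t) − p‖²` has zero
derivative: the landmark is not correctly estimated. -/
theorem noninvariant_correction_not_converging
    (k : ℝ) (hk : 0 < k)
    (p : EuclideanSpace ℝ (Fin 2))
    (phat : ℝ → EuclideanSpace ℝ (Fin 2))
    (z : EuclideanSpace ℝ (Fin 2)) (hz : z = rotE (-(π / 2)) p)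
    (zhat : ℝ → EuclideanSpace ℝ (Fin 2)) (hzhat : ∀ t, zhat t = rotE (-(π / 2)) (phat t))
    (hdyn : ∀ t, HasDerivAt phat (-k • (zhat t - z)) t) :
    ∀ t, HasDerivAt (fun s => ‖phat s - p‖ ^ 2) 0 t := by
  intro t
  set e : ℝ → EuclideanSpace ℝ (Fin 2) := fun s => phat s - p with he
  have hder : HasDerivAt e (-k • (rotE (-(π / 2)) (e t))) t := by
    have := (hdyn t).sub_const p
    simpa [hzhat, hz, map_sub, he] using this
  have h2 := hder.inner ℝ hder
  have hz0 : (inner ℝ (e t) (-k • (rotE (-(π / 2)) (e t)))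
      + inner ℝ (-k • (rotE (-(π / 2)) (e t))) (e t) : ℝ) = 0 := by
    rw [real_inner_comm (e t), real_inner_smul_right, real_inner_comm, rot_skew]
    ring
  rw [hz0] at h2
  have hfun : (fun s => ‖phat s - p‖ ^ 2) = fun s => (inner ℝ (e s) (e s) : ℝ) := by
    funext s; rw [real_inner_self_eq_norm_sq]
  rw [hfun]
  exact h2
end

section
/- Under the dynamics of the invariant SLAM observer — system ẋ = u R_θ e₁, θ̇ = u v, ṗ_i = 0 and observer θ̂' = u v, x̂' = u R_{θ̂} e₁ — the quantities θ̃ = θ̂ − θ and x̂ − R_{θ̃} x are constant in time: d/dt (θ̂(t) − θ(t)) = 0 and d/dt ( x̂(t) − R_{θ̂(t) − θ(t)} x(t) ) = 0 for all t. -/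
open Real Matrix

/-- The first basis vector `e₁ = (1,0)ᵀ` of `ℝ²`. -/
def e₁ : Fin 2 → ℝ := ![1, 0]

lemma Rot_add (a b : ℝ) : Rot (a + b) = Rot a * Rot b := by
  simp only [Rot, Real.cos_add, Real.sin_add]
  ext i j
  fin_cases i <;> fin_cases j <;>
    simp [Matrix.mul_apply, Fin.sum_univ_two] <;> ring

lemma mulVec_hasDerivAt (M : Matrix (Fin 2) (Fin 2) ℝ) {f : ℝ → Fin 2 → ℝ}
    {f' : Fin 2 → ℝ} {t : ℝ} (hf : HasDerivAt f f' t) :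
    HasDerivAt (fun s => M.mulVec (f s)) (M.mulVec f') t := by
  have := (M.mulVecLin.toContinuousLinearMap.hasFDerivAt
    (x := f t)).comp_hasDerivAt t hf
  exact this

/-- **The invariant state error of the vehicle pose is constant.**
Under the SLAM dynamics `ẋ = u R_θ e₁`, `θ̇ = u v` and the observer propagation
`θ̂' = u v`, `x̂' = u R_{θ̂} e₁`, the quantities `θ̃ = θ̂ − θ` and `x̂ − R_{θ̃} x` are constant:
their time derivatives vanish identically. -/
theorem invariant_pose_error_constant
    (u v : ℝ → ℝ)
    (x xhat : ℝ → Fin 2 → ℝ) (θ θhat : ℝ → ℝ)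
    (hx : ∀ t, HasDerivAt x (u t • (Rot (θ t)).mulVec e₁) t)
    (hθ : ∀ t, HasDerivAt θ (u t * v t) t)
    (hθhat : ∀ t, HasDerivAt θhat (u t * v t) t)
    (hxhat : ∀ t, HasDerivAt xhat (u t • (Rot (θhat t)).mulVec e₁) t) :
    (∀ t, HasDerivAt (fun s => θhat s - θ s) 0 t) ∧
    (∀ t, HasDerivAt (fun s => xhat s - (Rot (θhat s - θ s)).mulVec (x s))
      (0 : Fin 2 → ℝ) t) := by
  have htilde : ∀ t, HasDerivAt (fun s => θhat s - θ s) 0 t := by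
    intro t
    have := (hθhat t).sub (hθ t)
    rw [sub_self] at this
    exact this
  refine ⟨htilde, ?_⟩
  -- θ̃ is constant
  have hconst : ∀ s, θhat s - θ s = θhat 0 - θ 0 := by
    intro s
    have : ∀ a b : ℝ, (fun s => θhat s - θ s) a = (fun s => θhat s - θ s) b :=
      fun a b => is_const_of_deriv_eq_zero
        (fun y => (htilde y).differentiableAt)
        (fun y => (htilde y).deriv) a b
    simpa using this s 0
  intro t
  set c := θhat 0 - θ 0 with hc
  have heq : (fun s => xhat s - (Rot (θhat s - θ s)).mulVec (x s))
      = fun s => xhat s - (Rot c).mulVec (x s) := by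
    funext s; rw [hconst s]
  rw [heq]
  have h2 : HasDerivAt (fun s => (Rot c).mulVec (x s))
      ((Rot c).mulVec (u t • (Rot (θ t)).mulVec e₁)) t :=
    mulVec_hasDerivAt _ (hx t)
  have h3 := (hxhat t).sub h2
  have key : u t • (Rot (θhat t)).mulVec e₁
      - (Rot c).mulVec (u t • (Rot (θ t)).mulVec e₁) = 0 := by
    rw [Matrix.mulVec_smul, Matrix.mulVec_mulVec, ← Rot_add]
    have : c + θ t = θhat t := by rw [← hconst t]; ring
    rw [this, sub_self]
  rwa [key] at h3
end

section
/- For any θ, θ̂ ∈ ℝ and x, x̂, p_i, p̂_i ∈ ℝ², define the invariant state error components θ̃ = θ̂ − θ, x̃ = x̂ − R_{θ̃} x, p̃_i = p̂_i − R_{θ̃} p_i, and the invariant output errors E_i = R_{θ̂}(ẑ_i − z_i) where z_i = R_{−θ}(p_i − x) and ẑ_i = R_{−θ̂}(p̂_i − x̂). Then E_i = p̃_i − x̃ for every i; i.e. the invariant output error is a function of the invariant state error only. -/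
open Real Matrix

lemma Rot_mul (a b : ℝ) : Rot a * Rot b = Rot (a + b) := by
  ext i j
  fin_cases i <;> fin_cases j <;>
    simp [Rot, Matrix.mul_apply, Fin.sum_univ_two, Real.cos_add, Real.sin_add] <;> ring

lemma Rot_zero : Rot 0 = 1 := by
  ext i j; fin_cases i <;> fin_cases j <;> simp [Rot, Matrix.one_apply]

/-- **The invariant output error is a function of the invariant state error only.**
With the invariant state error components `θ̃ = θ̂ − θ`, `x̃ = x̂ − R_{θ̃} x`,
`p̃ᵢ = p̂ᵢ − R_{θ̃} pᵢ` and the invariant output errors `Eᵢ = R_{θ̂}(ẑᵢ − zᵢ)` where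
`zᵢ = R_{−θ}(pᵢ − x)` and `ẑᵢ = R_{−θ̂}(p̂ᵢ − x̂)`, one has `Eᵢ = p̃ᵢ − x̃` for every `i`. -/
theorem invariant_output_error_eq_state_error
    {N : ℕ} (θ θhat : ℝ) (x xhat : Fin 2 → ℝ) (p phat : Fin N → Fin 2 → ℝ)
    (θtil : ℝ) (hθtil : θtil = θhat - θ)
    (xtil : Fin 2 → ℝ) (hxtil : xtil = xhat - (Rot θtil).mulVec x)
    (ptil : Fin N → Fin 2 → ℝ) (hptil : ∀ i, ptil i = phat i - (Rot θtil).mulVec (p i))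
    (z zhat E : Fin N → Fin 2 → ℝ)
    (hz : ∀ i, z i = (Rot (-θ)).mulVec (p i - x))
    (hzhat : ∀ i, zhat i = (Rot (-θhat)).mulVec (phat i - xhat))
    (hE : ∀ i, E i = (Rot θhat).mulVec (zhat i - z i)) :
    ∀ i, E i = ptil i - xtil := by
  intro i
  rw [hE, hzhat, hz, Matrix.mulVec_sub, Matrix.mulVec_mulVec, Matrix.mulVec_mulVec,
    Rot_mul, Rot_mul, add_neg_cancel, Rot_zero, Matrix.one_mulVec, hptil, hxtil,
    hθtil, Matrix.mulVec_sub]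
  have : θhat + -θ = θhat - θ := by ring
  rw [this]
  abel
end

section
/- Let u, v : ℝ → ℝ be continuous, let 𝓛_θ : (ℝ²)^N → ℝ and 𝓛_x, 𝓛_i : (ℝ²)^N → ℝ² (1 ≤ i ≤ N) be continuous gain functions, and let J = R_{π/2} denote the rotation by π/2 (i.e. the planar action of e₃ ∧ ·). Suppose x, p_i, x̂, p̂_i : ℝ → ℝ² and θ, θ̂ : ℝ → ℝ are differentiable, the state satisfies ẋ = u R_θ e₁, θ̇ = u v, ṗ_i = 0 with outputs z_i = R_{−θ}(p_i − x), and the observer satisfies θ̂' = u v + 𝓛_θ(E), x̂' = u R_{θ̂} e₁ + 𝓛_θ(E) J x̂ + 𝓛_x(E), p̂_i' = 𝓛_θ(E) J p̂_i + 𝓛_i(E), where E = (R_{θ̂}(ẑ_i − z_i))_{1≤i≤N} and ẑ_i = R_{−θ̂}(p̂_i − x̂). Then the invariant state error η = (θ̃, x̃, p̃₁, …, p̃_N), with θ̃ = θ̂ − θ, x̃ = x̂ − R_{θ̃} x, p̃_i = p̂_i − R_{θ̃} p_i, satisfies the autonomous differential equation θ̃' = 𝓛_θ(E), x̃' = 𝓛_θ(E)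 J x̃ + 𝓛_x(E), p̃_i' = 𝓛_θ(E) J p̃_i + 𝓛_i(E), where E_i = p̃_i − x̃; in particular η' depends only on η and is completely independent of the trajectory and of the inputs u(t), v(t). -/
open Real Matrix

/-- `J = R_{π/2} = ((0,−1),(1,0))`, the planar action of `e₃ ∧ ·`. -/
def Jmat : Matrix (Fin 2) (Fin 2) ℝ := !![0, -1; 1, 0]


lemma rot_deriv (f : ℝ → ℝ) (g : ℝ → Fin 2 → ℝ) (f' : ℝ) (g' : Fin 2 → ℝ) (t : ℝ)
    (hf : HasDerivAt f f' t) (hg : HasDerivAt g g' t) :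
    HasDerivAt (fun s => (Rot (f s)).mulVec (g s))
      (f' • Jmat.mulVec ((Rot (f t)).mulVec (g t)) + (Rot (f t)).mulVec g') t := by
  have hg0 : HasDerivAt (fun s => g s 0) (g' 0) t := (hasDerivAt_pi.mp hg) 0
  have hg1 : HasDerivAt (fun s => g s 1) (g' 1) t := (hasDerivAt_pi.mp hg) 1
  have hc : HasDerivAt (fun s => Real.cos (f s)) (-Real.sin (f t) * f') t :=
    (Real.hasDerivAt_cos (f t)).comp t hf
  have hs : HasDerivAt (fun s => Real.sin (f s)) (Real.cos (f t) * f') t :=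
    (Real.hasDerivAt_sin (f t)).comp t hf
  rw [hasDerivAt_pi]
  intro j
  fin_cases j
  · have := ((hc.mul hg0).sub (hs.mul hg1))
    convert this using 1
    · funext s
      simp [Rot, Matrix.mulVec, dotProduct, Fin.sum_univ_two]
      try ring
    · simp [Rot, Jmat, Matrix.mulVec, dotProduct, Fin.sum_univ_two]
      try ring
  · have := ((hs.mul hg0).add (hc.mul hg1))
    convert this using 1
    · funext s
      simp [Rot, Matrix.mulVec, dotProduct, Fin.sum_univ_two]
      try ring
    · simp [Rot, Jmat, Matrix.mulVec, dotProduct, Fin.sum_univ_two]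
      try ring

/-- **Autonomy of the invariant error equation for the general invariant SLAM observer.**
For the SLAM system `ẋ = u R_θ e₁`, `θ̇ = u v`, `ṗᵢ = 0` with outputs `zᵢ = R_{−θ}(pᵢ − x)`
and the invariant observer `θ̂' = u v + 𝓛_θ(E)`, `x̂' = u R_{θ̂} e₁ + 𝓛_θ(E) J x̂ + 𝓛_x(E)`,
`p̂ᵢ' = 𝓛_θ(E) J p̂ᵢ + 𝓛ᵢ(E)` with `E = (R_{θ̂}(ẑᵢ − zᵢ))ᵢ`, the invariant state error
`η = (θ̃, x̃, p̃₁, …, p̃_N)`, `θ̃ = θ̂ − θ`, `x̃ = x̂ − R_{θ̃} x`, `p̃ᵢ = p̂ᵢ − R_{θ̃} pᵢ`, satisfies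
the autonomous equation `θ̃' = 𝓛_θ(E)`, `x̃' = 𝓛_θ(E) J x̃ + 𝓛_x(E)`,
`p̃ᵢ' = 𝓛_θ(E) J p̃ᵢ + 𝓛ᵢ(E)` with `Eᵢ = p̃ᵢ − x̃`: it depends only on `η`, independently of
the trajectory and of the inputs `u`, `v`. -/
theorem invariant_ekf_slam_error_autonomous
    {N : ℕ} (u v : ℝ → ℝ) (hu : Continuous u) (hv : Continuous v)
    (Lθ : (Fin N → Fin 2 → ℝ) → ℝ)
    (Lx : (Fin N → Fin 2 → ℝ) → Fin 2 → ℝ)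
    (Li : Fin N → (Fin N → Fin 2 → ℝ) → Fin 2 → ℝ)
    (hLθ : Continuous Lθ) (hLx : Continuous Lx) (hLi : ∀ i, Continuous (Li i))
    (x xhat : ℝ → Fin 2 → ℝ) (θ θhat : ℝ → ℝ)
    (p phat : Fin N → ℝ → Fin 2 → ℝ)
    (z zhat : Fin N → ℝ → Fin 2 → ℝ)
    (hz : ∀ i t, z i t = (Rot (-(θ t))).mulVec (p i t - x t))
    (hzhat : ∀ i t, zhat i t = (Rot (-(θhat t))).mulVec (phat i t - xhat t))
    (E : ℝ → Fin N → Fin 2 → ℝ)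
    (hE : ∀ t i, E t i = (Rot (θhat t)).mulVec (zhat i t - z i t))
    -- system dynamics
    (hx : ∀ t, HasDerivAt x (u t • (Rot (θ t)).mulVec e₁) t)
    (hθ : ∀ t, HasDerivAt θ (u t * v t) t)
    (hp : ∀ i t, HasDerivAt (p i) 0 t)
    -- observer dynamics
    (hθhat : ∀ t, HasDerivAt θhat (u t * v t + Lθ (E t)) t)
    (hxhat : ∀ t, HasDerivAt xhat
      (u t • (Rot (θhat t)).mulVec e₁ + Lθ (E t) • Jmat.mulVec (xhat t) + Lx (E t)) t)
    (hphat : ∀ i t, HasDerivAt (phat i)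
      (Lθ (E t) • Jmat.mulVec (phat i t) + Li i (E t)) t)
    -- invariant state error
    (θtil : ℝ → ℝ) (hθtil : ∀ t, θtil t = θhat t - θ t)
    (xtil : ℝ → Fin 2 → ℝ) (hxtil : ∀ t, xtil t = xhat t - (Rot (θtil t)).mulVec (x t))
    (ptil : Fin N → ℝ → Fin 2 → ℝ)
    (hptil : ∀ i t, ptil i t = phat i t - (Rot (θtil t)).mulVec (p i t))
    (Etil : ℝ → Fin N → Fin 2 → ℝ) (hEtil : ∀ t i, Etil t i = ptil i t - xtil t) :
    ∀ t, HasDerivAt θtil (Lθ (Etil t)) t ∧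
      HasDerivAt xtil (Lθ (Etil t) • Jmat.mulVec (xtil t) + Lx (Etil t)) t ∧
      ∀ i, HasDerivAt (ptil i)
        (Lθ (Etil t) • Jmat.mulVec (ptil i t) + Li i (Etil t)) t := by
  intro t
  have hEt : E t = Etil t := by
    funext i
    have h1 : θhat t + -(θhat t) = 0 := by ring
    have h2 : θhat t + -(θ t) = θtil t := by rw [hθtil]; ring
    rw [hE, hzhat, hz, Matrix.mulVec_sub, Matrix.mulVec_mulVec, Matrix.mulVec_mulVec,
      Rot_mul, Rot_mul, h1, h2, Rot_zero, Matrix.one_mulVec,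
      hEtil, hptil, hxtil, Matrix.mulVec_sub]
    abel
  have hθfun : (fun s => θhat s - θ s) = θtil := funext fun s => (hθtil s).symm
  have hdθ : HasDerivAt θtil (Lθ (E t)) t := by
    have h := (hθhat t).sub (hθ t)
    rw [show θhat - θ = θtil from hθfun] at h
    simpa using h
  refine ⟨hEt ▸ hdθ, ?_, ?_⟩
  · have hrot := rot_deriv θtil x (Lθ (E t)) (u t • (Rot (θ t)).mulVec e₁) t hdθ (hx t)
    have h := (hxhat t).sub hrot
    have hfun : (fun s => xhat s - (Rot (θtil s)).mulVec (x s)) = xtil :=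
      funext fun s => (hxtil s).symm
    rw [show (xhat - fun s => (Rot (θtil s)).mulVec (x s)) = xtil from hfun] at h
    rw [← hEt]
    refine h.congr_deriv ?_
    have h2 : θtil t + θ t = θhat t := by rw [hθtil]; ring
    have hR : Rot (θtil t) *ᵥ (Rot (θ t) *ᵥ e₁) = Rot (θhat t) *ᵥ e₁ := by
      rw [Matrix.mulVec_mulVec, Rot_mul, h2]
    rw [hxtil, Matrix.mulVec_sub, smul_sub, Matrix.mulVec_smul, hR]
    abel
  · intro i
    have hrot := rot_deriv θtil (p i) (Lθ (E t)) 0 t hdθ (hp i t)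
    have h := (hphat i t).sub hrot
    have hfun : (fun s => phat i s - (Rot (θtil s)).mulVec (p i s)) = ptil i :=
      funext fun s => (hptil i s).symm
    rw [show (phat i - fun s => (Rot (θtil s)).mulVec (p i s)) = ptil i from hfun] at h
    rw [← hEt]
    refine h.congr_deriv ?_
    rw [hptil, Matrix.mulVec_sub, smul_sub, Matrix.mulVec_zero]
    abel
end

section
/- Let u, v : ℝ → ℝ be continuous and consider the planar SLAM system in matrix form on SE(2)^{N+1}: Ẋ = X Ω, Ṗ_i = P_i Ω_i (1 ≤ i ≤ N), where X(t), P_i(t) are 3×3 homogeneous matrices ((R_θ, x), (0,1)) and ((R_θ, p_i), (0,1)) and Ω = ((ω_x, u e₁), (0, 0)), Ω_i = ((ω_x, 0), (0, 0)) with ω_x = uv·J embedded as 2×2 block. Let L_X, L_i : (ℝ²)^N → ℝ^{3×3} be continuous gain functions, and suppose the observer matrices X̂, P̂_i (of the same homogeneous form, with entries θ̂, x̂, p̂_i) satisfy X̂' = X̂ Ω + L_X(Ỹ₁, …, Ỹ_N) X̂ and P̂_i' = P̂_i Ω_i + L_i(Ỹ₁, …, Ỹ_N) P̂_i, where Ỹ_i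 = R_{θ̂}(ẑ_i − z_i) with z_i = R_{−θ}(p_i − x), ẑ_i = R_{−θ̂}(p̂_i − x̂). Then the invariant state errors η_x = X̂ X^{−1}, η_i = P̂_i P_i^{−1} satisfy η_x' = L_X(Ỹ) η_x and η_i' = L_i(Ỹ) η_i, where each Ỹ_i is given by the first two components of (η_i − η_x) H with H = (0,0,1)ᵀ; hence the full error equation is autonomous, depending only on (η_x, η₁, …, η_N) and not on the trajectory or the inputs u, v. -/
open Real Matrix

attribute [local instance] Matrix.normedAddCommGroup Matrix.normedSpace

/-- The homogeneous `SE(2)` matrix `((R_θ, x), (0_{1×2}, 1))`. -/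
noncomputable def SE2mat (θ : ℝ) (x : Fin 2 → ℝ) : Matrix (Fin 3) (Fin 3) ℝ :=
  !![Real.cos θ, -Real.sin θ, x 0;
     Real.sin θ,  Real.cos θ, x 1;
     0,           0,          1]

/-- The body velocity matrix `Ω = ((ω_x, u e₁), (0_{1×2}, 0))` with `ω_x = uv·J`. -/
def ΩmatX (u v : ℝ) : Matrix (Fin 3) (Fin 3) ℝ :=
  !![0,     -(u * v), u;
     u * v, 0,        0;
     0,     0,        0]

/-- The body velocity matrix `Ωᵢ = ((ω_x, 0), (0_{1×2}, 0))` for a fixed landmark. -/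
def ΩmatP (u v : ℝ) : Matrix (Fin 3) (Fin 3) ℝ :=
  !![0,     -(u * v), 0;
     u * v, 0,        0;
     0,     0,        0]

/- ### Auxiliary material -/


noncomputable def SE2inv (θ : ℝ) (x : Fin 2 → ℝ) : Matrix (Fin 3) (Fin 3) ℝ :=
  !![Real.cos θ, Real.sin θ, -(Real.cos θ * x 0 + Real.sin θ * x 1);
     -Real.sin θ, Real.cos θ, Real.sin θ * x 0 - Real.cos θ * x 1; 0, 0, 1]

def Ωgen (w r : ℝ) : Matrix (Fin 3) (Fin 3) ℝ := !![0, -w, r; w, 0, 0; 0, 0, 0]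

lemma SE2_mul_inv (θ : ℝ) (x : Fin 2 → ℝ) : SE2mat θ x * SE2inv θ x = 1 := by
  ext i j
  fin_cases i <;> fin_cases j <;>
    simp [SE2mat, SE2inv, Matrix.mul_apply, Fin.sum_univ_three, Matrix.one_apply]
  · linear_combination Real.sin_sq_add_cos_sq θ
  · ring
  · linear_combination (-(x 0)) * Real.sin_sq_add_cos_sq θ
  · ring
  · linear_combination Real.sin_sq_add_cos_sq θ
  · linear_combination (-(x 1)) * Real.sin_sq_add_cos_sq θ

lemma SE2_inv_eq (θ : ℝ) (x : Fin 2 → ℝ) : (SE2mat θ x)⁻¹ = SE2inv θ x :=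
  Matrix.inv_eq_right_inv (SE2_mul_inv θ x)

lemma hasDerivAt_matrix {f : ℝ → Matrix (Fin 3) (Fin 3) ℝ} {f' : Matrix (Fin 3) (Fin 3) ℝ}
    {t : ℝ} :
    HasDerivAt f f' t ↔ ∀ i j, HasDerivAt (fun s => f s i j) (f' i j) t := by
  exact hasDerivAt_pi.trans (forall_congr' fun i => hasDerivAt_pi)

lemma HasDerivAt.matMul {f g : ℝ → Matrix (Fin 3) (Fin 3) ℝ}
    {f' g' : Matrix (Fin 3) (Fin 3) ℝ} {t : ℝ}
    (hf : HasDerivAt f f' t) (hg : HasDerivAt g g' t) :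
    HasDerivAt (fun s => f s * g s) (f' * g t + f t * g') t := by
  rw [hasDerivAt_matrix] at hf hg ⊢
  intro i j
  simp only [Matrix.add_apply, Matrix.mul_apply]
  have h := HasDerivAt.fun_sum (u := Finset.univ) (fun k _ => ((hf i k).mul (hg k j)))
  refine h.congr_deriv ?_
  rw [← Finset.sum_add_distrib]

lemma se2inv_hasDerivAt {θ : ℝ → ℝ} {x : ℝ → Fin 2 → ℝ} (w r : ℝ) {t : ℝ}
    (hX : HasDerivAt (fun s => SE2mat (θ s) (x s)) (SE2mat (θ t) (x t) * Ωgen w r) t) :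
    HasDerivAt (fun s => SE2inv (θ s) (x s)) (-(Ωgen w r * SE2inv (θ t) (x t))) t := by
  rw [hasDerivAt_matrix] at hX
  have hc := hX 0 0
  have hs := hX 1 0
  have hx0 := hX 0 2
  have hx1 := hX 1 2
  simp [SE2mat, Ωgen, Matrix.mul_apply, Fin.sum_univ_three, Matrix.vecHead, Matrix.vecTail]
    at hc hs hx0 hx1
  rw [hasDerivAt_matrix]
  intro i j
  fin_cases i <;> fin_cases j <;>
    simp [SE2inv, Ωgen, Matrix.mul_apply, Fin.sum_univ_three, Matrix.vecHead, Matrix.vecTail]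
  · convert hc using 1; ring
  · convert hs using 1; ring
  · refine ((hs.mul hx1).neg.add (hc.mul hx0).neg).congr_deriv ?_
    first
      | linear_combination (r : ℝ) * Real.sin_sq_add_cos_sq (θ t)
      | linear_combination (-r : ℝ) * Real.sin_sq_add_cos_sq (θ t)
      | ring
  · refine hs.neg.congr_deriv ?_; ring
  · convert hc using 1; ring
  · refine ((hs.mul hx0).sub (hc.mul hx1)).congr_deriv ?_; ring
  · exact hasDerivAt_const t 0
  · exact hasDerivAt_const t 0
  · exact hasDerivAt_const t 1


/-- **Autonomy of the invariant error equation for SLAM in matrix form on SE(2)^{N+1}.**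
For the left-invariant SLAM system `Ẋ = X Ω`, `Ṗᵢ = Pᵢ Ωᵢ` and the invariant observer
`X̂' = X̂ Ω + L_X(Ỹ) X̂`, `P̂ᵢ' = P̂ᵢ Ωᵢ + Lᵢ(Ỹ) P̂ᵢ` with invariant output errors
`Ỹᵢ = R_{θ̂}(ẑᵢ − zᵢ)`, the invariant state errors `η_x = X̂ X⁻¹`, `ηᵢ = P̂ᵢ Pᵢ⁻¹` satisfy
`η_x' = L_X(Ỹ) η_x`, `ηᵢ' = Lᵢ(Ỹ) ηᵢ`, where each `Ỹᵢ` is given by the first two components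
of `(ηᵢ − η_x) H` with `H = (0,0,1)ᵀ`: the error equation is autonomous, depending only on
`(η_x, η₁, …, η_N)` and not on the trajectory or the inputs `u`, `v`. -/
theorem slam_matrix_error_equation_autonomous
    {N : ℕ} (u v : ℝ → ℝ) (hu : Continuous u) (hv : Continuous v)
    (LX : (Fin N → Fin 2 → ℝ) → Matrix (Fin 3) (Fin 3) ℝ)
    (Li : Fin N → (Fin N → Fin 2 → ℝ) → Matrix (Fin 3) (Fin 3) ℝ)
    (hLX : Continuous LX) (hLi : ∀ i, Continuous (Li i))
    (x xhat : ℝ → Fin 2 → ℝ) (θ θhat : ℝ → ℝ)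
    (p phat : Fin N → ℝ → Fin 2 → ℝ)
    (z zhat : Fin N → ℝ → Fin 2 → ℝ)
    (hz : ∀ i t, z i t = (Rot (-(θ t))).mulVec (p i t - x t))
    (hzhat : ∀ i t, zhat i t = (Rot (-(θhat t))).mulVec (phat i t - xhat t))
    (Ytil : ℝ → Fin N → Fin 2 → ℝ)
    (hY : ∀ t i, Ytil t i = (Rot (θhat t)).mulVec (zhat i t - z i t))
    (X Xhat : ℝ → Matrix (Fin 3) (Fin 3) ℝ)
    (P Phat : Fin N → ℝ → Matrix (Fin 3) (Fin 3) ℝ)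
    (hXdef : ∀ t, X t = SE2mat (θ t) (x t))
    (hXhatdef : ∀ t, Xhat t = SE2mat (θhat t) (xhat t))
    (hPdef : ∀ i t, P i t = SE2mat (θ t) (p i t))
    (hPhatdef : ∀ i t, Phat i t = SE2mat (θhat t) (phat i t))
    -- system dynamics: Ẋ = X Ω, Ṗᵢ = Pᵢ Ωᵢ
    (hX : ∀ t, HasDerivAt X (X t * ΩmatX (u t) (v t)) t)
    (hP : ∀ i t, HasDerivAt (P i) (P i t * ΩmatP (u t) (v t)) t)
    -- observer dynamics: X̂' = X̂ Ω + L_X(Ỹ) X̂, P̂ᵢ' = P̂ᵢ Ωᵢ + Lᵢ(Ỹ) P̂ᵢ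
    (hXhat : ∀ t, HasDerivAt Xhat (Xhat t * ΩmatX (u t) (v t) + LX (Ytil t) * Xhat t) t)
    (hPhat : ∀ i t, HasDerivAt (Phat i)
      (Phat i t * ΩmatP (u t) (v t) + Li i (Ytil t) * Phat i t) t)
    -- invariant state errors
    (ηx : ℝ → Matrix (Fin 3) (Fin 3) ℝ) (hηx : ∀ t, ηx t = Xhat t * (X t)⁻¹)
    (η : Fin N → ℝ → Matrix (Fin 3) (Fin 3) ℝ)
    (hη : ∀ i t, η i t = Phat i t * (P i t)⁻¹) :
    (∀ t, HasDerivAt ηx (LX (Ytil t) * ηx t) t) ∧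
    (∀ i t, HasDerivAt (η i) (Li i (Ytil t) * η i t) t) ∧
    (∀ t i, Ytil t i =
      ![((η i t - ηx t).mulVec ![0, 0, 1]) 0, ((η i t - ηx t).mulVec ![0, 0, 1]) 1]) := by
  have hXinv : ∀ s, (X s)⁻¹ = SE2inv (θ s) (x s) := fun s => by
    rw [hXdef]; exact SE2_inv_eq _ _
  have hPinv : ∀ i s, (P i s)⁻¹ = SE2inv (θ s) (p i s) := fun i s => by
    rw [hPdef]; exact SE2_inv_eq _ _
  refine ⟨?_, ?_, ?_⟩
  · intro t
    have hηxfun : ηx = fun s => Xhat s * SE2inv (θ s) (x s) :=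
      funext fun s => by rw [hηx, hXinv]
    have hXd : HasDerivAt (fun s => SE2mat (θ s) (x s))
        (SE2mat (θ t) (x t) * Ωgen (u t * v t) (u t)) t := by
      have h := hX t
      have hfun : X = fun s => SE2mat (θ s) (x s) := funext hXdef
      rw [hfun] at h
      convert h using 2
      all_goals simp [Ωgen, ΩmatX]
    have hM := se2inv_hasDerivAt (u t * v t) (u t) hXd
    have hD := (hXhat t).matMul hM
    rw [hηxfun]
    convert hD using 1
    beta_reduce
    rw [show ΩmatX (u t) (v t) = Ωgen (u t * v t) (u t) by simp [Ωgen, ΩmatX]]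
    noncomm_ring
  · intro i t
    have hηfun : η i = fun s => Phat i s * SE2inv (θ s) (p i s) :=
      funext fun s => by rw [hη, hPinv]
    have hPd : HasDerivAt (fun s => SE2mat (θ s) (p i s))
        (SE2mat (θ t) (p i t) * Ωgen (u t * v t) 0) t := by
      have h := hP i t
      have hfun : P i = fun s => SE2mat (θ s) (p i s) := funext (hPdef i)
      rw [hfun] at h
      convert h using 2
      all_goals simp [Ωgen, ΩmatP]
    have hM := se2inv_hasDerivAt (u t * v t) 0 hPd
    have hD := (hPhat i t).matMul hM
    rw [hηfun]
    convert hD using 1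
    beta_reduce
    rw [show ΩmatP (u t) (v t) = Ωgen (u t * v t) 0 by simp [Ωgen, ΩmatP]]
    noncomm_ring
  · intro t i
    rw [hY t i, hzhat i t, hz i t, hη i t, hηx t, hPinv i t, hXinv t,
      hPhatdef i t, hXhatdef t]
    funext j
    fin_cases j <;>
      simp [Rot, SE2mat, SE2inv, Matrix.mulVec, Matrix.mul_apply, Matrix.sub_apply,
        Fin.sum_univ_three, Fin.sum_univ_two, Real.cos_neg, Real.sin_neg, dotProduct,
        Matrix.vecHead, Matrix.vecTail, Pi.sub_apply]
    · first
        | linear_combination (phat i t 0 - xhat t 0) * Real.sin_sq_add_cos_sq (θhat t)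
        | linear_combination (xhat t 0 - phat i t 0) * Real.sin_sq_add_cos_sq (θhat t)
        | ring
    · first
        | linear_combination (phat i t 1 - xhat t 1) * Real.sin_sq_add_cos_sq (θhat t)
        | linear_combination (xhat t 1 - phat i t 1) * Real.sin_sq_add_cos_sq (θhat t)
        | ring
end
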